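/- There exists a universal constant C > 0 such that for every integer k ≥ 1, ∑_{i=0}^{k-1} ( [k+2]_4 / ( [i+2]_4 · [k−i]_2 · [k−i−2] ) )^2 ≤ C [k−1]^2. -/

import Mathlib

/-- `br m = max m 1`, the bracket convention `[m]` from the paper, as a real number. -/
noncomputable def br (m : ℤ) : ℝ := max (m : ℝ) 1

/-- `brf m k = [m]_k = [m]·[m-1]⋯[m-k+1]`, the modified falling factorial;
in particular `brf m 2 = [m][m-1]` and `brf m 4 = [m][m-1][m-2][m-3]`. -/
noncomputable def brf (m : ℤ) (k : ℕ) : ℝ := ∏ i ∈ Finset.range k, br (m - i)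

lemma one_le_br (m : ℤ) : 1 ≤ br m := le_max_right _ _
lemma br_pos (m : ℤ) : 0 < br m := lt_of_lt_of_le one_pos (one_le_br m)
lemma br_nonneg (m : ℤ) : 0 ≤ br m := (br_pos m).le
lemma br_le (m : ℤ) (x : ℝ) (h1 : (m:ℝ) ≤ x) (h2 : 1 ≤ x) : br m ≤ x := max_le h1 h2
lemma le_br (m : ℤ) : (m:ℝ) ≤ br m := le_max_left _ _

lemma br_ge_pat (m : ℤ) (x : ℝ) (h1 : (m:ℝ) ≤ 1 → x ≤ 1) (h2 : 1 ≤ (m:ℝ) → x ≤ (m:ℝ)) :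
    x ≤ br m := by
  rcases le_total ((m:ℝ)) 1 with h | h
  · rw [br, max_eq_right h]; exact h1 h
  · rw [br, max_eq_left h]; exact h2 h

lemma br_mono {m n : ℤ} (h : m ≤ n) : br m ≤ br n :=
  max_le_max (by exact_mod_cast h) le_rfl

lemma brf_four (m : ℤ) : brf m 4 = br m * br (m-1) * br (m-2) * br (m-3) := by
  simp [brf, Finset.prod_range_succ]


lemma brf_two (m : ℤ) : brf m 2 = br m * br (m-1) := by
  simp [brf, Finset.prod_range_succ]

lemma brf_pos (m : ℤ) (k : ℕ) : 0 < brf m k :=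
  Finset.prod_pos fun i _ => br_pos _

lemma term_bound (k i : ℕ) (hik : i < k) :
    brf ((k:ℤ)+2) 4 / (brf ((i:ℤ)+2) 4 * brf ((k:ℤ)-i) 2 * br ((k:ℤ)-i-2))
      ≤ 1728 * (br ((k:ℤ)-1) / ((i:ℝ)+1)^4 + 1 / br ((k:ℤ)-i-1)^2) := by
  have hki : (i:ℝ) + 1 ≤ (k:ℝ) := by exact_mod_cast hik
  have hi0 : (0:ℝ) ≤ (i:ℝ) := Nat.cast_nonneg i
  have hbrP : (0:ℝ) < br ((k:ℤ)-i-1) := br_pos _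
  have hP : 0 ≤ br ((k:ℤ)-1) / ((i:ℝ)+1)^4 :=
    div_nonneg (br_nonneg _) (by positivity)
  have hQ : (0:ℝ) < 1 / br ((k:ℤ)-i-1)^2 := by positivity
  have hNpos : 0 < brf ((k:ℤ)+2) 4 := brf_pos _ _
  have hDpos : 0 < brf ((i:ℤ)+2) 4 * brf ((k:ℤ)-i) 2 * br ((k:ℤ)-i-2) :=
    mul_pos (mul_pos (brf_pos _ _) (brf_pos _ _)) (br_pos _)
  rcases le_or_gt (k:ℝ) (2*(i:ℝ)+2) with hc | hc
  · -- case 1: k ≤ 2i+2, bound by 384 / br(k-i-1)^2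
    have hN : brf ((k:ℤ)+2) 4 ≤ 16*((i:ℝ)+2)^4 := by
      rw [brf_four]
      have b1 : br ((k:ℤ)+2) ≤ 2*((i:ℝ)+2) := br_le _ _ (by push_cast; linarith) (by linarith)
      have b2 : br ((k:ℤ)+2-1) ≤ 2*((i:ℝ)+2) := br_le _ _ (by push_cast; linarith) (by linarith)
      have b3 : br ((k:ℤ)+2-2) ≤ 2*((i:ℝ)+2) := br_le _ _ (by push_cast; linarith) (by linarith)
      have b4 : br ((k:ℤ)+2-3) ≤ 2*((i:ℝ)+2) := br_le _ _ (by push_cast; linarith) (by linarith)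
      calc br ((k:ℤ)+2) * br ((k:ℤ)+2-1) * br ((k:ℤ)+2-2) * br ((k:ℤ)+2-3)
          ≤ (2*((i:ℝ)+2)) * (2*((i:ℝ)+2)) * (2*((i:ℝ)+2)) * (2*((i:ℝ)+2)) :=
            mul_le_mul (mul_le_mul (mul_le_mul b1 b2 (br_nonneg _) (by positivity))
              b3 (br_nonneg _) (by positivity)) b4 (br_nonneg _) (by positivity)
        _ = 16*((i:ℝ)+2)^4 := by ring
    have hDA : ((i:ℝ)+2)^4/24 ≤ brf ((i:ℤ)+2) 4 := by
      rw [brf_four]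
      have b1 : ((i:ℝ)+2) ≤ br ((i:ℤ)+2) := by
        apply br_ge_pat <;> intro h <;> push_cast at h ⊢ <;> linarith
      have b2 : ((i:ℝ)+2)/2 ≤ br ((i:ℤ)+2-1) := by
        apply br_ge_pat <;> intro h <;> push_cast at h ⊢ <;> linarith
      have b3 : ((i:ℝ)+2)/3 ≤ br ((i:ℤ)+2-2) := by
        apply br_ge_pat <;> intro h <;> push_cast at h ⊢ <;> linarith
      have b4 : ((i:ℝ)+2)/4 ≤ br ((i:ℤ)+2-3) := by
        apply br_ge_pat <;> intro h <;> push_cast at h ⊢ <;> linarith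
      calc ((i:ℝ)+2)^4/24 = ((i:ℝ)+2) * (((i:ℝ)+2)/2) * (((i:ℝ)+2)/3) * (((i:ℝ)+2)/4) := by ring
        _ ≤ br ((i:ℤ)+2) * br ((i:ℤ)+2-1) * br ((i:ℤ)+2-2) * br ((i:ℤ)+2-3) :=
            mul_le_mul (mul_le_mul (mul_le_mul b1 b2 (by positivity)
                (br_nonneg _)) b3 (by positivity)
                (mul_nonneg (br_nonneg _) (br_nonneg _))) b4 (by positivity)
                (mul_nonneg (mul_nonneg (br_nonneg _) (br_nonneg _)) (br_nonneg _))
    have hDB : br ((k:ℤ)-i-1)^2 ≤ brf ((k:ℤ)-i) 2 * br ((k:ℤ)-i-2) := by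
      rw [brf_two]
      have h1 : br ((k:ℤ)-i-1) ≤ br ((k:ℤ)-i) := br_mono (by omega)
      have h2 : br ((k:ℤ)-i-1) ≤ br ((k:ℤ)-i-1) * br ((k:ℤ)-i-2) :=
        le_mul_of_one_le_right (br_nonneg _) (one_le_br _)
      calc br ((k:ℤ)-i-1)^2 = br ((k:ℤ)-i-1) * br ((k:ℤ)-i-1) := sq _
        _ ≤ br ((k:ℤ)-i) * (br ((k:ℤ)-i-1) * br ((k:ℤ)-i-2)) :=
            mul_le_mul h1 h2 (br_nonneg _) (br_nonneg _)
        _ = br ((k:ℤ)-i) * br ((k:ℤ)-i-1) * br ((k:ℤ)-i-2) := (mul_assoc _ _ _).symm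
    have hD : ((i:ℝ)+2)^4/24 * br ((k:ℤ)-i-1)^2
        ≤ brf ((i:ℤ)+2) 4 * brf ((k:ℤ)-i) 2 * br ((k:ℤ)-i-2) := by
      rw [mul_assoc]
      exact mul_le_mul hDA hDB (by positivity) (brf_pos _ _).le
    have step : brf ((k:ℤ)+2) 4 / (brf ((i:ℤ)+2) 4 * brf ((k:ℤ)-i) 2 * br ((k:ℤ)-i-2))
        ≤ (16*((i:ℝ)+2)^4) / (((i:ℝ)+2)^4/24 * br ((k:ℤ)-i-1)^2) :=
      div_le_div₀ (by positivity) hN (by positivity) hD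
    have eq1 : (16*((i:ℝ)+2)^4) / (((i:ℝ)+2)^4/24 * br ((k:ℤ)-i-1)^2)
        = 384 * (1 / br ((k:ℤ)-i-1)^2) := by
      have hx : br ((k:ℤ)-i-1) ≠ 0 := hbrP.ne'
      have hi2 : ((i:ℝ)+2) ≠ 0 := by positivity
      field_simp
      ring
    calc brf ((k:ℤ)+2) 4 / (brf ((i:ℤ)+2) 4 * brf ((k:ℤ)-i) 2 * br ((k:ℤ)-i-2))
        ≤ 384 * (1 / br ((k:ℤ)-i-1)^2) := by rw [← eq1]; exact step
      _ ≤ 1728 * (br ((k:ℤ)-1) / ((i:ℝ)+1)^4 + 1 / br ((k:ℤ)-i-1)^2) := by nlinarith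
  · -- case 2: k > 2i+2
    have hN : brf ((k:ℤ)+2) 4 ≤ 16*((k:ℝ)-i)^4 := by
      rw [brf_four]
      have b1 : br ((k:ℤ)+2) ≤ 2*((k:ℝ)-i) := br_le _ _ (by push_cast; linarith) (by linarith)
      have b2 : br ((k:ℤ)+2-1) ≤ 2*((k:ℝ)-i) := br_le _ _ (by push_cast; linarith) (by linarith)
      have b3 : br ((k:ℤ)+2-2) ≤ 2*((k:ℝ)-i) := br_le _ _ (by push_cast; linarith) (by linarith)
      have b4 : br ((k:ℤ)+2-3) ≤ 2*((k:ℝ)-i) := br_le _ _ (by push_cast; linarith) (by linarith)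
      calc br ((k:ℤ)+2) * br ((k:ℤ)+2-1) * br ((k:ℤ)+2-2) * br ((k:ℤ)+2-3)
          ≤ (2*((k:ℝ)-i)) * (2*((k:ℝ)-i)) * (2*((k:ℝ)-i)) * (2*((k:ℝ)-i)) := by
            have hx : (0:ℝ) ≤ 2*((k:ℝ)-i) := by linarith
            exact mul_le_mul (mul_le_mul (mul_le_mul b1 b2 (br_nonneg _) hx)
              b3 (br_nonneg _) (mul_nonneg hx hx)) b4 (br_nonneg _)
              (mul_nonneg (mul_nonneg hx hx) hx)
        _ = 16*((k:ℝ)-i)^4 := by ring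
    have hDA : ((i:ℝ)+1)^4/6 ≤ brf ((i:ℤ)+2) 4 := by
      rw [brf_four]
      have b1 : ((i:ℝ)+1) ≤ br ((i:ℤ)+2) := by
        apply br_ge_pat <;> intro h <;> push_cast at h ⊢ <;> linarith
      have b2 : ((i:ℝ)+1) ≤ br ((i:ℤ)+2-1) := by
        apply br_ge_pat <;> intro h <;> push_cast at h ⊢ <;> linarith
      have b3 : ((i:ℝ)+1)/2 ≤ br ((i:ℤ)+2-2) := by
        apply br_ge_pat <;> intro h <;> push_cast at h ⊢ <;> linarith
      have b4 : ((i:ℝ)+1)/3 ≤ br ((i:ℤ)+2-3) := by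
        apply br_ge_pat <;> intro h <;> push_cast at h ⊢ <;> linarith
      calc ((i:ℝ)+1)^4/6 = ((i:ℝ)+1) * ((i:ℝ)+1) * (((i:ℝ)+1)/2) * (((i:ℝ)+1)/3) := by ring
        _ ≤ br ((i:ℤ)+2) * br ((i:ℤ)+2-1) * br ((i:ℤ)+2-2) * br ((i:ℤ)+2-3) :=
            mul_le_mul (mul_le_mul (mul_le_mul b1 b2 (by positivity)
                (br_nonneg _)) b3 (by positivity)
                (mul_nonneg (br_nonneg _) (br_nonneg _))) b4 (by positivity)
                (mul_nonneg (mul_nonneg (br_nonneg _) (br_nonneg _)) (br_nonneg _))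
    have hDB : ((k:ℝ)-i)^3/6 ≤ brf ((k:ℤ)-i) 2 * br ((k:ℤ)-i-2) := by
      rw [brf_two]
      have b1 : ((k:ℝ)-i) ≤ br ((k:ℤ)-i) := by
        apply br_ge_pat <;> intro h <;> push_cast at h ⊢ <;> linarith
      have b2 : ((k:ℝ)-i)/2 ≤ br ((k:ℤ)-i-1) := by
        apply br_ge_pat <;> intro h <;> push_cast at h ⊢ <;> linarith
      have b3 : ((k:ℝ)-i)/3 ≤ br ((k:ℤ)-i-2) := by
        apply br_ge_pat <;> intro h <;> push_cast at h ⊢ <;> linarith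
      have hkipos : (0:ℝ) ≤ (k:ℝ)-i := by linarith
      calc ((k:ℝ)-i)^3/6 = ((k:ℝ)-i) * (((k:ℝ)-i)/2) * (((k:ℝ)-i)/3) := by ring
        _ ≤ br ((k:ℤ)-i) * br ((k:ℤ)-i-1) * br ((k:ℤ)-i-2) :=
            mul_le_mul (mul_le_mul b1 b2 (by positivity) (br_nonneg _)) b3 (by positivity)
              (mul_nonneg (br_nonneg _) (br_nonneg _))
    have hD : ((i:ℝ)+1)^4/6 * (((k:ℝ)-i)^3/6)
        ≤ brf ((i:ℤ)+2) 4 * brf ((k:ℤ)-i) 2 * br ((k:ℤ)-i-2) := by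
      rw [mul_assoc]
      have hkn : (0:ℝ) ≤ (k:ℝ)-i := by linarith
      exact mul_le_mul hDA hDB (div_nonneg (pow_nonneg hkn 3) (by norm_num)) (brf_pos _ _).le
    have hkipos : (0:ℝ) < (k:ℝ)-i := by linarith
    have hden2 : (0:ℝ) < ((i:ℝ)+1)^4/6 * (((k:ℝ)-i)^3/6) :=
      mul_pos (by positivity) (div_pos (pow_pos hkipos 3) (by norm_num))
    have step : brf ((k:ℤ)+2) 4 / (brf ((i:ℤ)+2) 4 * brf ((k:ℤ)-i) 2 * br ((k:ℤ)-i-2))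
        ≤ (16*((k:ℝ)-i)^4) / (((i:ℝ)+1)^4/6 * (((k:ℝ)-i)^3/6)) :=
      div_le_div₀ (by positivity) hN hden2 hD
    have eq1 : (16*((k:ℝ)-i)^4) / (((i:ℝ)+1)^4/6 * (((k:ℝ)-i)^3/6))
        = 576 * ((k:ℝ)-i) / ((i:ℝ)+1)^4 := by
      rw [div_eq_div_iff hden2.ne' (by positivity)]
      field_simp
      ring
    have hk3 : (k:ℝ) ≤ 3 * br ((k:ℤ)-1) := by
      have : (k:ℝ)/3 ≤ br ((k:ℤ)-1) := by
        apply br_ge_pat <;> intro h <;> push_cast at h ⊢ <;> linarith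
      linarith
    calc brf ((k:ℤ)+2) 4 / (brf ((i:ℤ)+2) 4 * brf ((k:ℤ)-i) 2 * br ((k:ℤ)-i-2))
        ≤ 576 * ((k:ℝ)-i) / ((i:ℝ)+1)^4 := by rw [← eq1]; exact step
      _ ≤ 1728 * br ((k:ℤ)-1) / ((i:ℝ)+1)^4 := by
          exact (div_le_div_iff_of_pos_right (by positivity)).mpr (by linarith [hk3])
      _ ≤ 1728 * (br ((k:ℤ)-1) / ((i:ℝ)+1)^4 + 1 / br ((k:ℤ)-i-1)^2) := by
          rw [mul_add, mul_div_assoc]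
          linarith [hQ]

lemma sum_inv_pow8 (k : ℕ) :
    ∑ i ∈ Finset.range k, 1/((i:ℝ)+1)^8 ≤ 2 := by
  set f : ℕ → ℝ := fun j => 1/((j:ℝ)+1) with hf
  have key : ∀ i ∈ Finset.range k, 1/((i:ℝ)+1)^8 ≤ 2 * (f i - f (i+1)) := by
    intro i _
    have hx : (0:ℝ) ≤ (i:ℝ) := Nat.cast_nonneg i
    have h1 : ((i:ℝ)+1)^2 ≤ ((i:ℝ)+1)^8 := pow_le_pow_right₀ (by linarith) (by norm_num)
    have h2 : 1/((i:ℝ)+1)^8 ≤ 1/((i:ℝ)+1)^2 :=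
      one_div_le_one_div_of_le (by positivity) h1
    have e : 2 * (f i - f (i+1)) = 2/(((i:ℝ)+1)*((i:ℝ)+2)) := by
      simp only [hf]
      push_cast
      rw [eq_div_iff (by positivity)]
      have n1 : ((i:ℝ)+1) ≠ 0 := by positivity
      have n2 : ((i:ℝ)+1+1) ≠ 0 := by positivity
      field_simp
      ring_nf
    have h3 : 1/((i:ℝ)+1)^2 ≤ 2 * (f i - f (i+1)) := by
      rw [e, div_le_div_iff₀ (by positivity) (by positivity)]
      nlinarith
    linarith
  calc ∑ i ∈ Finset.range k, 1/((i:ℝ)+1)^8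
      ≤ ∑ i ∈ Finset.range k, 2 * (f i - f (i+1)) := Finset.sum_le_sum key
    _ = 2 * (f 0 - f k) := by rw [← Finset.mul_sum, Finset.sum_range_sub']
    _ ≤ 2 := by
        have h0 : f 0 = 1 := by simp [hf]
        have hk : 0 ≤ f k := by positivity
        rw [h0]; linarith

lemma sum_inv_br4 (k : ℕ) :
    ∑ i ∈ Finset.range k, 1/br ((k:ℤ)-i-1)^4 ≤ 8 := by
  set f : ℕ → ℝ := fun j => 1/((k:ℝ)-j+1) with hf
  have key : ∀ i ∈ Finset.range k, 1/br ((k:ℤ)-i-1)^4 ≤ 8 * (f (i+1) - f i) := by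
    intro i hi
    have hik : i < k := Finset.mem_range.mp hi
    have hki : (i:ℝ)+1 ≤ (k:ℝ) := by exact_mod_cast hik
    have hi0 : (0:ℝ) ≤ (i:ℝ) := Nat.cast_nonneg i
    have hb : ((k:ℝ)-i)/2 ≤ br ((k:ℤ)-i-1) := by
      apply br_ge_pat <;> intro h <;> push_cast at h ⊢ <;> linarith
    have h1b : (1:ℝ) ≤ br ((k:ℤ)-i-1) := one_le_br _
    have hb2 : (((k:ℝ)-i)/2)^2 ≤ br ((k:ℤ)-i-1)^2 := pow_le_pow_left₀ (by linarith) hb 2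
    have hbb : br ((k:ℤ)-i-1)^2 ≤ br ((k:ℤ)-i-1)^4 := pow_le_pow_right₀ h1b (by norm_num)
    have h4 : ((k:ℝ)-i)^2/4 ≤ br ((k:ℤ)-i-1)^4 := by
      calc ((k:ℝ)-i)^2/4 = (((k:ℝ)-i)/2)^2 := by ring
        _ ≤ br ((k:ℤ)-i-1)^2 := hb2
        _ ≤ br ((k:ℤ)-i-1)^4 := hbb
    have hyp : (0:ℝ) < (k:ℝ)-i := by linarith
    have h5 : 1/br ((k:ℤ)-i-1)^4 ≤ 1/(((k:ℝ)-i)^2/4) :=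
      one_div_le_one_div_of_le (div_pos (pow_pos hyp 2) (by norm_num)) h4
    have e : 8 * (f (i+1) - f i) = 8/(((k:ℝ)-i)*((k:ℝ)-i+1)) := by
      simp only [hf]
      push_cast
      rw [eq_div_iff (mul_pos hyp (by linarith)).ne']
      have n1 : ((k:ℝ)-i) ≠ 0 := hyp.ne'
      have n2 : ((k:ℝ)-(i+1)+1) ≠ 0 := by
        intro h; apply hyp.ne'; linarith
      have n3 : ((k:ℝ)-i+1) ≠ 0 := by positivity
      field_simp
      ring_nf
    have h6 : 1/(((k:ℝ)-i)^2/4) ≤ 8/(((k:ℝ)-i)*((k:ℝ)-i+1)) := by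
      rw [div_le_div_iff₀ (div_pos (pow_pos hyp 2) (by norm_num)) (by positivity)]
      nlinarith
    rw [e]
    linarith
  calc ∑ i ∈ Finset.range k, 1/br ((k:ℤ)-i-1)^4
      ≤ ∑ i ∈ Finset.range k, 8 * (f (i+1) - f i) := Finset.sum_le_sum key
    _ = 8 * (f k - f 0) := by rw [← Finset.mul_sum, Finset.sum_range_sub]
    _ ≤ 8 := by
        have h0 : f k = 1 := by simp [hf]
        have hk : 0 ≤ f 0 := by
          have h : (0:ℝ) ≤ (k:ℝ) := Nat.cast_nonneg k
          simp only [hf]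
          push_cast
          apply one_div_nonneg.mpr
          linarith
        rw [h0]; linarith

/-- there is a universal constant `C > 0` such that for every `k ≥ 1`,
`∑_{i=0}^{k-1} ([k+2]_4 / ([i+2]_4 [k-i]_2 [k-i-2]))² ≤ C [k-1]²`. -/
theorem commutator_coefficient_sum_bound :
    ∃ C : ℝ, 0 < C ∧ ∀ k : ℕ, 1 ≤ k →
      ∑ i ∈ Finset.range k,
        (brf ((k : ℤ) + 2) 4 /
          (brf ((i : ℤ) + 2) 4 * brf ((k : ℤ) - i) 2 * br ((k : ℤ) - i - 2))) ^ 2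
        ≤ C * br ((k : ℤ) - 1) ^ 2 := by
  refine ⟨59719680, by norm_num, fun k hk => ?_⟩
  have hbr1 : (1:ℝ) ≤ br ((k:ℤ)-1) := one_le_br _
  have step1 : ∑ i ∈ Finset.range k,
      (brf ((k : ℤ) + 2) 4 /
        (brf ((i : ℤ) + 2) 4 * brf ((k : ℤ) - i) 2 * br ((k : ℤ) - i - 2))) ^ 2
      ≤ ∑ i ∈ Finset.range k,
        (2*1728^2) * ((br ((k:ℤ)-1))^2 * (1/((i:ℝ)+1)^8) + 1/br ((k:ℤ)-i-1)^4) := by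
    apply Finset.sum_le_sum
    intro i hi
    have hik : i < k := Finset.mem_range.mp hi
    have hT := term_bound k i hik
    have hTnn : 0 ≤ brf ((k : ℤ) + 2) 4 /
        (brf ((i : ℤ) + 2) 4 * brf ((k : ℤ) - i) 2 * br ((k : ℤ) - i - 2)) :=
      div_nonneg (brf_pos _ _).le
        (mul_nonneg (mul_nonneg (brf_pos _ _).le (brf_pos _ _).le) (br_nonneg _))
    set P : ℝ := br ((k:ℤ)-1) / ((i:ℝ)+1)^4 with hP
    set Q : ℝ := 1 / br ((k:ℤ)-i-1)^2 with hQ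
    have hPnn : 0 ≤ P := div_nonneg (br_nonneg _) (by positivity)
    have hQnn : 0 ≤ Q := by
      rw [hQ]; positivity
    have e1 : (br ((k:ℤ)-1))^2 * (1/((i:ℝ)+1)^8) = P^2 := by
      rw [hP, div_pow, ← pow_mul]; ring
    have e2 : 1/br ((k:ℤ)-i-1)^4 = Q^2 := by
      rw [hQ, div_pow, one_pow, ← pow_mul]
    rw [e1, e2]
    nlinarith [sq_nonneg (P - Q), hT, hTnn, hPnn, hQnn]
  have hS1 : ∑ i ∈ Finset.range k, 1/((i:ℝ)+1)^8 ≤ 2 := sum_inv_pow8 k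
  have hS2 : ∑ i ∈ Finset.range k, 1/br ((k:ℤ)-i-1)^4 ≤ 8 := sum_inv_br4 k
  have step2 : ∑ i ∈ Finset.range k,
      (2*1728^2) * ((br ((k:ℤ)-1))^2 * (1/((i:ℝ)+1)^8) + 1/br ((k:ℤ)-i-1)^4)
      = (2*1728^2) * ((br ((k:ℤ)-1))^2 * (∑ i ∈ Finset.range k, 1/((i:ℝ)+1)^8)
          + ∑ i ∈ Finset.range k, 1/br ((k:ℤ)-i-1)^4) := by
    rw [← Finset.mul_sum, Finset.sum_add_distrib, ← Finset.mul_sum]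
  have hsq : (0:ℝ) ≤ (br ((k:ℤ)-1))^2 := sq_nonneg _
  have h1sq : (1:ℝ) ≤ (br ((k:ℤ)-1))^2 := by nlinarith
  calc ∑ i ∈ Finset.range k,
      (brf ((k : ℤ) + 2) 4 /
        (brf ((i : ℤ) + 2) 4 * brf ((k : ℤ) - i) 2 * br ((k : ℤ) - i - 2))) ^ 2
      ≤ (2*1728^2) * ((br ((k:ℤ)-1))^2 * (∑ i ∈ Finset.range k, 1/((i:ℝ)+1)^8)
          + ∑ i ∈ Finset.range k, 1/br ((k:ℤ)-i-1)^4) := step2 ▸ step1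
    _ ≤ 59719680 * br ((k:ℤ)-1) ^ 2 := by nlinarith [hS1, hS2, hsq, h1sq]
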